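/- Let C be a braided monoidal category with braiding β in which every object has a right dual whose right dual again exists (for instance, C right rigid). Suppose given, for every object a, an isomorphism φ_a : a ≅ aᘁᘁ which is natural with respect to double right mates: f ≫ φ_b = φ_a ≫ (fᘁ)ᘁ for every morphism f : a ⟶ b. Define θ_a := φ_a ≫ (id_{aᘁᘁ} ⊗ coev_a) ≫ (β_{aᘁᘁ,a} ⊗ id_{aᘁ}) ≫ (id_a ⊗ ev_{aᘁ}) : a ⟶ a, with unitors and associators inserted. Then each θ_a is an isomorphism, and θ is a natural transformation of the identity functor: f ≫ θ_b = θ_a ≫ f for every f : a ⟶ b. -/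

import Mathlib

open CategoryTheory MonoidalCategory

/-- The twist `θ_a : a ⟶ a` obtained from a pivotal-type family `φ_a : a ≅ aᘁᘁ` in a braided
right rigid category:
`θ_a = (id ⊗ ev_{aᘁ}) ∘ (β_{aᘁᘁ,a} ⊗ id) ∘ (id ⊗ coev_a) ∘ φ_a`, with the necessary
unitors and associators inserted. -/
def twistOfPivotal {C : Type*} [Category C] [MonoidalCategory C] [BraidedCategory C]
    [RightRigidCategory C] (φ : ∀ a : C, a ≅ ((aᘁ)ᘁ)) (a : C) : a ⟶ a :=
  (φ a).hom ≫ (ρ_ ((aᘁ)ᘁ)).inv ≫ (((aᘁ)ᘁ) ◁ (η_ a (aᘁ))) ≫ (α_ ((aᘁ)ᘁ) a (aᘁ)).inv ≫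
    ((β_ ((aᘁ)ᘁ) a).hom ▷ (aᘁ)) ≫ (α_ a ((aᘁ)ᘁ) (aᘁ)).hom ≫
      (a ◁ (ε_ (aᘁ) ((aᘁ)ᘁ))) ≫ (ρ_ a).hom


namespace TwistOfPivotalAux

open CategoryTheory MonoidalCategory BraidedCategory Category

variable {C : Type*} [Category C] [MonoidalCategory C] [BraidedCategory C]
variable {C : Type*} [Category C] [MonoidalCategory C] [BraidedCategory C]

lemma gen {W V a : C} (h : 𝟙_ C ⟶ a ⊗ V) (e : W ⊗ V ⟶ 𝟙_ C) :
    (ρ_ W).inv ≫ W ◁ h ≫ (α_ W a V).inv ≫ (β_ W a).hom ▷ V ≫ (α_ a W V).hom ≫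
        a ◁ e ≫ (ρ_ a).hom =
      (ρ_ W).inv ≫ W ◁ (h ≫ (β_ V a).inv) ≫ (α_ W V a).inv ≫ e ▷ a ≫ (λ_ a).hom := by
  have h1 : e ▷ a ≫ (λ_ a).hom = (β_ (W ⊗ V) a).hom ≫ a ◁ e ≫ (ρ_ a).hom := by
    rw [← braiding_naturality_left_assoc, braiding_tensorUnit_left]; simp
  rw [h1, braiding_tensor_left_hom]
  simp

variable [RightRigidCategory C]

def psi (a : C) : ((aᘁ)ᘁ) ⟶ a :=
  (ρ_ ((aᘁ)ᘁ)).inv ≫ (((aᘁ)ᘁ) ◁ (η_ a (aᘁ))) ≫ (α_ ((aᘁ)ᘁ) a (aᘁ)).inv ≫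
    ((β_ ((aᘁ)ᘁ) a).hom ▷ (aᘁ)) ≫ (α_ a ((aᘁ)ᘁ) (aᘁ)).hom ≫
      (a ◁ (ε_ (aᘁ) ((aᘁ)ᘁ))) ≫ (ρ_ a).hom

lemma psi_eq (a : C) :
    psi a = (rightDualIso (inferInstance : ExactPairing (aᘁ) ((aᘁ)ᘁ))
      (exactPairing_swap a (aᘁ))).hom := by
  dsimp [psi, rightDualIso, rightAdjointMate, exactPairing_swap, ExactPairing.coevaluation,
    ExactPairing.evaluation]
  simp only [id_whiskerRight, MonoidalCategory.whiskerLeft_id, Category.id_comp, Category.comp_id]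
  exact gen _ _

instance (a : C) : IsIso (psi a) := by rw [psi_eq]; infer_instance

set_option maxHeartbeats 1000000 in
lemma psi_natural {a b : C} (f : a ⟶ b) : (rightAdjointMate (rightAdjointMate f)) ≫ psi b = psi a ≫ f := by
  calc (rightAdjointMate (rightAdjointMate f)) ≫ psi b
      = 𝟙 _ ⊗≫ ((((aᘁ)ᘁ : C)) ◁ η_ b (bᘁ) ≫ (rightAdjointMate (rightAdjointMate f)) ▷ (b ⊗ bᘁ)) ⊗≫
        (β_ (((bᘁ)ᘁ : C)) b).hom ▷ (bᘁ) ⊗≫ b ◁ ε_ (bᘁ) (((bᘁ)ᘁ : C)) ⊗≫ 𝟙 b := by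
        dsimp [psi]; rw [whisker_exchange]; monoidal
    _ = 𝟙 _ ⊗≫ (((aᘁ)ᘁ : C)) ◁ η_ b (bᘁ) ⊗≫ (((rightAdjointMate (rightAdjointMate f)) ▷ b ≫ (β_ (((bᘁ)ᘁ : C)) b).hom) ▷ (bᘁ)) ⊗≫
        b ◁ ε_ (bᘁ) (((bᘁ)ᘁ : C)) ⊗≫ 𝟙 b := by monoidal
    _ = 𝟙 _ ⊗≫ (((aᘁ)ᘁ : C)) ◁ η_ b (bᘁ) ⊗≫ (((β_ (((aᘁ)ᘁ : C)) b).hom ≫ b ◁ (rightAdjointMate (rightAdjointMate f))) ▷ (bᘁ)) ⊗≫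
        b ◁ ε_ (bᘁ) (((bᘁ)ᘁ : C)) ⊗≫ 𝟙 b := by rw [braiding_naturality_left]
    _ = 𝟙 _ ⊗≫ (((aᘁ)ᘁ : C)) ◁ η_ b (bᘁ) ⊗≫ (β_ (((aᘁ)ᘁ : C)) b).hom ▷ (bᘁ) ⊗≫
        b ◁ ((rightAdjointMate (rightAdjointMate f)) ▷ (bᘁ) ≫ ε_ (bᘁ) (((bᘁ)ᘁ : C))) ⊗≫ 𝟙 b := by monoidal
    _ = 𝟙 _ ⊗≫ (((aᘁ)ᘁ : C)) ◁ η_ b (bᘁ) ⊗≫ (β_ (((aᘁ)ᘁ : C)) b).hom ▷ (bᘁ) ⊗≫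
        b ◁ ((((aᘁ)ᘁ : C)) ◁ (rightAdjointMate f) ≫ ε_ (aᘁ) (((aᘁ)ᘁ : C))) ⊗≫ 𝟙 b := by
        rw [rightAdjointMate_comp_evaluation]
    _ = 𝟙 _ ⊗≫ (((aᘁ)ᘁ : C)) ◁ η_ b (bᘁ) ⊗≫ ((β_ (((aᘁ)ᘁ : C)) b).hom ▷ (bᘁ) ≫
        (b ⊗ (((aᘁ)ᘁ : C))) ◁ (rightAdjointMate f)) ⊗≫ b ◁ ε_ (aᘁ) (((aᘁ)ᘁ : C)) ⊗≫ 𝟙 b := by monoidal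
    _ = 𝟙 _ ⊗≫ ((((aᘁ)ᘁ : C)) ◁ (η_ b (bᘁ) ≫ b ◁ (rightAdjointMate f))) ⊗≫ (β_ (((aᘁ)ᘁ : C)) b).hom ▷ (aᘁ) ⊗≫
        b ◁ ε_ (aᘁ) (((aᘁ)ᘁ : C)) ⊗≫ 𝟙 b := by rw [← whisker_exchange]; monoidal
    _ = 𝟙 _ ⊗≫ ((((aᘁ)ᘁ : C)) ◁ (η_ a (aᘁ) ≫ f ▷ (aᘁ))) ⊗≫ (β_ (((aᘁ)ᘁ : C)) b).hom ▷ (aᘁ) ⊗≫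
        b ◁ ε_ (aᘁ) (((aᘁ)ᘁ : C)) ⊗≫ 𝟙 b := by rw [coevaluation_comp_rightAdjointMate]
    _ = 𝟙 _ ⊗≫ (((aᘁ)ᘁ : C)) ◁ η_ a (aᘁ) ⊗≫ (((((aᘁ)ᘁ : C)) ◁ f ≫ (β_ (((aᘁ)ᘁ : C)) b).hom) ▷ (aᘁ)) ⊗≫
        b ◁ ε_ (aᘁ) (((aᘁ)ᘁ : C)) ⊗≫ 𝟙 b := by monoidal
    _ = 𝟙 _ ⊗≫ (((aᘁ)ᘁ : C)) ◁ η_ a (aᘁ) ⊗≫ (((β_ (((aᘁ)ᘁ : C)) a).hom ≫ f ▷ (((aᘁ)ᘁ : C))) ▷ (aᘁ)) ⊗≫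
        b ◁ ε_ (aᘁ) (((aᘁ)ᘁ : C)) ⊗≫ 𝟙 b := by rw [braiding_naturality_right]
    _ = 𝟙 _ ⊗≫ (((aᘁ)ᘁ : C)) ◁ η_ a (aᘁ) ⊗≫ (β_ (((aᘁ)ᘁ : C)) a).hom ▷ (aᘁ) ⊗≫
        (a ◁ ε_ (aᘁ) (((aᘁ)ᘁ : C)) ≫ f ▷ 𝟙_ C) ⊗≫ 𝟙 b := by rw [whisker_exchange]; monoidal
    _ = psi a ≫ f := by dsimp [psi]; monoidal


lemma twist_eq (φ : ∀ a : C, a ≅ ((aᘁ)ᘁ)) (a : C) :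
    twistOfPivotal φ a = (φ a).hom ≫ psi a := rfl

end TwistOfPivotalAux

/-- If `φ_a : a ≅ aᘁᘁ` is a family of isomorphisms natural with respect to double right
adjoint mates, then the induced twists `θ_a` are isomorphisms and form a natural
transformation of the identity functor. -/
theorem twistOfPivotal_isIso_and_natural
    {C : Type*} [Category C] [MonoidalCategory C] [BraidedCategory C]
    [RightRigidCategory C] (φ : ∀ a : C, a ≅ ((aᘁ)ᘁ))
    (hφ : ∀ (a b : C) (f : a ⟶ b),
      f ≫ (φ b).hom = (φ a).hom ≫ rightAdjointMate (rightAdjointMate f)) :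
    (∀ a : C, IsIso (twistOfPivotal φ a)) ∧
    (∀ (a b : C) (f : a ⟶ b), f ≫ twistOfPivotal φ b = twistOfPivotal φ a ≫ f) := by
  open TwistOfPivotalAux in
  constructor
  · intro a
    rw [twist_eq]
    infer_instance
  · intro a b f
    rw [twist_eq, twist_eq, ← Category.assoc, hφ a b f, Category.assoc, psi_natural,
      Category.assoc]
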